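/- Let χ be a chirotope on a finite set X and let a ∈ X be an extreme element of χ. Then the relation p <ₐ q defined by χ(a,p,q)=1 is a strict total order on X \ {a}. -/

import Mathlib

/-- A sign function: defined on triples of pairwise distinct elements, with
values in `{-1, +1}`, alternating under permutations of the arguments. -/
def SignFn {X : Type*} (χ : X → X → X → ℤ) : Prop :=
  ∀ x y z : X, x ≠ y → y ≠ z → x ≠ z →
    (χ x y z = 1 ∨ χ x y z = -1) ∧ χ x y z = χ y z x ∧ χ x y z = -χ y x z

/-- The interiority axiom of chirotopes. -/
def Interiority {X : Type*} (χ : X → X → X → ℤ) : Prop :=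
  ∀ t x y z : X, t ≠ x → t ≠ y → t ≠ z → x ≠ y → x ≠ z → y ≠ z →
    χ t y z = 1 → χ x t z = 1 → χ x y t = 1 → χ x y z = 1

/-- The transitivity axiom of chirotopes. -/
def Transitivity {X : Type*} (χ : X → X → X → ℤ) : Prop :=
  ∀ s t x y z : X, s ≠ t → s ≠ x → s ≠ y → s ≠ z → t ≠ x → t ≠ y → t ≠ z →
      x ≠ y → x ≠ z → y ≠ z →
    χ t s x = 1 → χ t s y = 1 → χ t s z = 1 → χ x y t = 1 → χ y z t = 1 →
      χ x z t = 1

/-- A chirotope: a sign function satisfying interiority and transitivity. -/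
def Chirotope {X : Type*} (χ : X → X → X → ℤ) : Prop :=
  SignFn χ ∧ Interiority χ ∧ Transitivity χ

/-- `x` is extreme in `χ`: there is `y ≠ x` such that `χ x y z` takes the same
value for all `z ∉ {x, y}`. -/
def ExtremeIn {X : Type*} (χ : X → X → X → ℤ) (x : X) : Prop :=
  ∃ y, y ≠ x ∧ ∃ c : ℤ, ∀ z, z ≠ x → z ≠ y → χ x y z = c

section Aux

variable {X : Type*} (χ : X → X → X → ℤ)

lemma aux_cyc (hsf : SignFn χ) {x y z : X} (h1 : x ≠ y) (h2 : y ≠ z) (h3 : x ≠ z) :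
    χ x y z = χ y z x := (hsf x y z h1 h2 h3).2.1

lemma aux_sw12 (hsf : SignFn χ) {x y z : X} (h1 : x ≠ y) (h2 : y ≠ z) (h3 : x ≠ z) :
    χ x y z = -χ y x z := (hsf x y z h1 h2 h3).2.2

lemma aux_vals (hsf : SignFn χ) {x y z : X} (h1 : x ≠ y) (h2 : y ≠ z) (h3 : x ≠ z) :
    χ x y z = 1 ∨ χ x y z = -1 := (hsf x y z h1 h2 h3).1

/-- swapping the last two arguments negates the sign -/
lemma aux_sw23 (hsf : SignFn χ) {x y z : X} (h1 : x ≠ y) (h2 : y ≠ z) (h3 : x ≠ z) :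
    χ x y z = -χ x z y := by
  have e1 := aux_cyc χ hsf h1 h2 h3
  have e2 := aux_cyc χ hsf h2 h3.symm h1.symm
  have e3 := aux_sw12 χ hsf h3.symm h1 h2.symm
  linarith

/-- Key contradiction in the `c = -1` case: a `3`-cycle `p → q → r → p`
around `a`, where `p` beats both `q` and `r` in the `b`-tournament, is
impossible. -/
lemma aux_key (hsf : SignFn χ) (hint : Interiority χ) (htr : Transitivity χ)
    {a b p q r : X}
    (hab : a ≠ b) (hap : a ≠ p) (haq : a ≠ q) (har : a ≠ r)
    (hbp : b ≠ p) (hbq : b ≠ q) (hbr : b ≠ r)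
    (hpq : p ≠ q) (hpr : p ≠ r) (hqr : q ≠ r)
    (habp : χ a b p = -1)
    (h1 : χ a p q = 1) (h2 : χ a q r = 1) (h3 : χ a r p = 1)
    (hs1 : χ p q b = 1) (hs2 : χ p r b = 1) : False := by
  -- χ p a r = 1
  have e1 := aux_sw12 χ hsf (x := p) (y := a) (z := r) hap.symm har hpr
  have e2 := aux_sw23 χ hsf (x := a) (y := p) (z := r) hap hpr har
  have hpar : χ p a r = 1 := by linarith
  -- χ p q a = 1
  have e3 := aux_cyc χ hsf (x := p) (y := q) (z := a) hpq haq.symm hap.symm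
  have e4 := aux_cyc χ hsf (x := q) (y := a) (z := p) haq.symm hap hpq.symm
  have hpqa : χ p q a = 1 := by linarith
  -- χ p q r = 1 by interiority
  have hpqr : χ p q r = 1 := hint a p q r hap haq har hpq hpr hqr h2 hpar hpqa
  -- χ r b p = 1
  have e5 := aux_cyc χ hsf (x := p) (y := r) (z := b) hpr hbr.symm hbp.symm
  have hrbp : χ r b p = 1 := by linarith
  -- transitivity with s = q, t = p, (x, y, z) = (a, r, b)
  have final : χ a b p = 1 :=
    htr q p a r b hpq.symm haq.symm hqr hbq.symm hap.symm hpr hbp.symm har hab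
      hbr.symm hpqa hpqr hs1 h3 hrbp
  linarith

end Aux

theorem extreme_gives_strictTotalOrder
    {X : Type*} [Fintype X] (χ : X → X → X → ℤ) (hχ : Chirotope χ)
    (a : X) (ha : ExtremeIn χ a) :
    IsStrictTotalOrder {p : X // p ≠ a}
      (fun p q => p.1 ≠ q.1 ∧ χ a p.1 q.1 = 1) := by
  obtain ⟨hsf, hint, htr⟩ := hχ
  obtain ⟨b, hba, c, hc⟩ := ha
  -- main transitivity fact
  have trans_key : ∀ p q r : X, p ≠ a → q ≠ a → r ≠ a → p ≠ q → q ≠ r →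
      χ a p q = 1 → χ a q r = 1 → p ≠ r ∧ χ a p r = 1 := by
    intro p q r hpa hqa hra hpq hqr h1 h2
    have hpr : p ≠ r := by
      rintro rfl
      have e := aux_sw23 χ hsf (x := a) (y := p) (z := q) hpa.symm hpq hqa.symm
      linarith
    refine ⟨hpr, ?_⟩
    rcases aux_vals χ hsf (x := a) (y := p) (z := r) hpa.symm hpr hra.symm with h | h
    · exact h
    exfalso
    -- so we have a 3-cycle p → q → r → p around a
    have h3 : χ a r p = 1 := by
      have e := aux_sw23 χ hsf (x := a) (y := p) (z := r) hpa.symm hpr hra.symm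
      linarith
    -- none of p, q, r can be b
    have hbp : b ≠ p := by
      rintro rfl
      have c1 := hc q hqa hpq.symm
      have c2 := hc r hra hpr.symm
      linarith
    have hbq : b ≠ q := by
      rintro rfl
      have c1 := hc r hra hqr.symm
      have c2 := hc p hpa hpq
      have e := aux_sw23 χ hsf (x := a) (y := p) (z := b) hpa.symm hpq hqa.symm
      linarith
    have hbr : b ≠ r := by
      rintro rfl
      have c1 := hc p hpa hpr
      have c2 := hc q hqa hqr
      have e := aux_sw23 χ hsf (x := a) (y := q) (z := b) hqa.symm hqr hra.symm
      linarith
    have hcp := hc p hpa hbp.symm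
    have hcq := hc q hqa hbq.symm
    have hcr := hc r hra hbr.symm
    -- χ x y a = χ a x y for points ≠ a
    have to_a : ∀ x y : X, x ≠ a → y ≠ a → x ≠ y → χ x y a = χ a x y := by
      intro x y hxa hya hxy
      have e1 := aux_cyc χ hsf (x := x) (y := y) (z := a) hxy hya hxa
      have e2 := aux_cyc χ hsf (x := y) (y := a) (z := x) hya hxa.symm hxy.symm
      linarith
    rcases aux_vals χ hsf (x := a) (y := b) (z := p) hba.symm hbp hpa.symm with hco | hco
    · -- c = 1 : direct transitivity with s = b, t = a
      have hcq1 : χ a b q = 1 := by linarith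
      have hcr1 : χ a b r = 1 := by linarith
      have hpqa : χ p q a = 1 := by rw [to_a p q hpa hqa hpq]; exact h1
      have hqra : χ q r a = 1 := by rw [to_a q r hqa hra hqr]; exact h2
      have final : χ p r a = 1 :=
        htr b a p q r hba hbp hbq hbr hpa.symm hqa.symm hra.symm hpq hpr hqr
          hco hcq1 hcr1 hpqa hqra
      rw [to_a p r hpa hra hpr] at final
      linarith
    · -- c = -1
      have habq : χ a b q = -1 := by linarith
      have habr : χ a b r = -1 := by linarith
      -- transitivity of the b-tournament (s = a, t = b)
      have hbax : ∀ w : X, w ≠ a → w ≠ b → χ a b w = -1 → χ b a w = 1 := by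
        intro w hwa hwb habw
        have e := aux_sw12 χ hsf (x := a) (y := b) (z := w) hba.symm hwb.symm hwa.symm
        linarith
      have btrans : ∀ x y z : X, x ≠ a → y ≠ a → z ≠ a → x ≠ b → y ≠ b → z ≠ b →
          x ≠ y → y ≠ z → x ≠ z → χ a b x = -1 → χ a b y = -1 → χ a b z = -1 →
          χ x y b = 1 → χ y z b = 1 → χ x z b = 1 := by
        intro x y z hxa hya hza hxb hyb hzb hxy hyz hxz e1 e2 e3 f1 f2
        exact htr a b x y z hba.symm hxa.symm hya.symm hza.symm hxb.symm hyb.symm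
          hzb.symm hxy hxz hyz (hbax x hxa hxb e1) (hbax y hya hyb e2)
          (hbax z hza hzb e3) f1 f2
      -- sign flips in b-tournament
      have bflip : ∀ x y : X, x ≠ y → x ≠ b → y ≠ b → χ x y b = -1 → χ y x b = 1 := by
        intro x y hxy hxb hyb e
        have f := aux_sw12 χ hsf (x := x) (y := y) (z := b) hxy hyb hxb
        linarith
      -- case analysis on the b-tournament on {p, q, r}: find a source
      rcases aux_vals χ hsf (x := p) (y := q) (z := b) hpq hbq.symm hbp.symm with t1 | t1
      · rcases aux_vals χ hsf (x := p) (y := r) (z := b) hpr hbr.symm hbp.symm with t2 | t2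
        · -- p is a source
          exact aux_key χ hsf hint htr hba.symm hpa.symm hqa.symm hra.symm hbp hbq hbr
            hpq hpr hqr hco h1 h2 h3 t1 t2
        · have t2' := bflip p r hpr hbp.symm hbr.symm t2
          rcases aux_vals χ hsf (x := r) (y := q) (z := b) hqr.symm hbq.symm hbr.symm with t3 | t3
          · -- r is a source: use cycle (r, p, q)
            exact aux_key χ hsf hint htr hba.symm hra.symm hpa.symm hqa.symm hbr hbp hbq
              hpr.symm hqr.symm hpq habr h3 h1 h2 t2' t3
          · have t3' := bflip r q hqr.symm hbr.symm hbq.symm t3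
            have := btrans p q r hpa hqa hra hbp.symm hbq.symm hbr.symm hpq hqr hpr
              hco habq habr t1 t3'
            linarith
      · have t1' := bflip p q hpq hbp.symm hbq.symm t1
        rcases aux_vals χ hsf (x := q) (y := r) (z := b) hqr hbr.symm hbq.symm with t2 | t2
        · -- q is a source: use cycle (q, r, p)
          exact aux_key χ hsf hint htr hba.symm hqa.symm hra.symm hpa.symm hbq hbr hbp
            hqr hpq.symm hpr.symm habq h2 h3 h1 t2 t1'
        · have t2' := bflip q r hqr hbq.symm hbr.symm t2
          rcases aux_vals χ hsf (x := r) (y := p) (z := b) hpr.symm hbp.symm hbr.symm with t3 | t3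
          · -- r is a source: cycle (r, p, q)
            exact aux_key χ hsf hint htr hba.symm hra.symm hpa.symm hqa.symm hbr hbp hbq
              hpr.symm hqr.symm hpq habr h3 h1 h2 t3 t2'
          · have t3' := bflip r p hpr.symm hbr.symm hbp.symm t3
            have := btrans q p r hqa hpa hra hbq.symm hbp.symm hbr.symm hpq.symm hpr hqr
              habq hco habr t1' t3'
            linarith
  refine { trichotomous := ?_, irrefl := ?_, trans := ?_ }
  · intro p q
    by_cases hpq : p = q
    · exact fun _ _ => hpq
    · have hne : p.1 ≠ q.1 := fun h => hpq (Subtype.ext h)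
      rcases aux_vals χ hsf (x := a) (y := p.1) (z := q.1) (Ne.symm p.2) hne (Ne.symm q.2)
        with h | h
      · exact fun h1 _ => (h1 ⟨hne, h⟩).elim
      · refine fun _ h2 => (h2 ⟨hne.symm, ?_⟩).elim
        have e := aux_sw23 χ hsf (x := a) (y := p.1) (z := q.1) (Ne.symm p.2) hne (Ne.symm q.2)
        linarith
  · intro p hp
    exact hp.1 rfl
  · intro p q r hpq hqr
    exact trans_key p.1 q.1 r.1 p.2 q.2 r.2 hpq.1 hqr.1 hpq.2 hqr.2
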